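/- Let A₀, A₁ be smooth vector fields on ℝ^N, with A₀ = ωΥ where ω > 0 is smooth and Υ admits a 2π-periodic flow φ. Let k ≥ 1 and suppose T : (−ε₀,ε₀) × ℝ^N → ℝ^N is smooth, each T_ε := T(ε,·) is a diffeomorphism of ℝ^N, T₀ = id, and there exist smooth vector fields Ā₂,…,Ā_k, each invariant under the flow (i.e. (φ_t)^*Āᵢ = Āᵢ for all t), and a smooth map R : (−ε₀,ε₀) × ℝ^N → ℝ^N such that (D T_ε)⁻¹ ∘ (A₀ + εA₁) ∘ T_ε = A₀ + ε⟨A₁⟩ + Σ_{i=2}^k (ε^i/i!) Āᵢ + ε^{k+1} R(ε,·). Suppose J : ℝ^N → ℝ is smooth, invariant under the flow (J ∘ φ(t,·) = J for all t), and satisfies L_{⟨A₁⟩}J = 0 and L_{Āᵢ}J = 0 for i = 2,…,k. Then for every m ∈ ℝ^N, (L_{A₀+εA₁}(J ∘ T_ε^{-1}))(m) = O(ε^{k+1}) as ε → 0. -/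

import Mathlib

open Real MeasureTheory Asymptotics Set

noncomputable section

/-- Pullback of a vector field `X` by the time-`t` flow map:
`(φ_t)^*X(m) = (D_mφ(t,·))⁻¹ (X(φ(t,m)))`. -/
def pullVF {N : ℕ} (φ : ℝ → (Fin N → ℝ) → (Fin N → ℝ))
    (X : (Fin N → ℝ) → (Fin N → ℝ)) (t : ℝ) (m : Fin N → ℝ) : Fin N → ℝ :=
  (fderiv ℝ (φ t) m).inverse (X (φ t m))

/-- Average of a vector field along a `2π`-periodic flow. -/
def avgVF {N : ℕ} (φ : ℝ → (Fin N → ℝ) → (Fin N → ℝ))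
    (X : (Fin N → ℝ) → (Fin N → ℝ)) (m : Fin N → ℝ) : Fin N → ℝ :=
  (1 / (2 * π)) • ∫ t in (0:ℝ)..(2 * π), pullVF φ X t m

/-- If a smooth family of diffeomorphisms `T_ε` (with `T₀ = id`) puts
the perturbed field `A₀ + εA₁` into an `S¹`-invariant normal form of order `k`, and
the flow-invariant function `J` is a first integral of the truncated normal form,
then `J ∘ T_ε⁻¹` is an approximate first integral of order `k` for `A₀ + εA₁`. -/
theorem stmt4 {N : ℕ} (k : ℕ) (hk : 1 ≤ k)
    (ω : (Fin N → ℝ) → ℝ) (hω_smooth : ContDiff ℝ (⊤ : ℕ∞) ω) (hω_pos : ∀ m, 0 < ω m)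
    (Υ : (Fin N → ℝ) → (Fin N → ℝ)) (hΥ : ContDiff ℝ (⊤ : ℕ∞) Υ)
    (φ : ℝ → (Fin N → ℝ) → (Fin N → ℝ))
    (hφ_smooth : ContDiff ℝ (⊤ : ℕ∞) (fun p : ℝ × (Fin N → ℝ) => φ p.1 p.2))
    (hφ0 : ∀ m, φ 0 m = m)
    (hφ' : ∀ t m, HasDerivAt (fun s => φ s m) (Υ (φ t m)) t)
    (hper : ∀ t m, φ (t + 2 * π) m = φ t m)
    (A₁ : (Fin N → ℝ) → (Fin N → ℝ)) (hA₁ : ContDiff ℝ (⊤ : ℕ∞) A₁)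
    (ε₀ : ℝ) (hε₀ : 0 < ε₀)
    (T Tinv : ℝ → (Fin N → ℝ) → (Fin N → ℝ))
    (hT_smooth : ContDiffOn ℝ (⊤ : ℕ∞) (fun p : ℝ × (Fin N → ℝ) => T p.1 p.2)
      ((Ioo (-ε₀) ε₀) ×ˢ (univ : Set (Fin N → ℝ))))
    (hT0 : ∀ m, T 0 m = m)
    (hT_diffeo : ∀ ε ∈ Ioo (-ε₀) ε₀, Function.Bijective (T ε) ∧
      ContDiff ℝ (⊤ : ℕ∞) (Tinv ε) ∧
      Function.LeftInverse (Tinv ε) (T ε) ∧ Function.RightInverse (Tinv ε) (T ε))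
    (Abar : ℕ → (Fin N → ℝ) → (Fin N → ℝ))
    (hAbar_smooth : ∀ i, 2 ≤ i → i ≤ k → ContDiff ℝ (⊤ : ℕ∞) (Abar i))
    (hAbar_inv : ∀ i, 2 ≤ i → i ≤ k → ∀ t m, pullVF φ (Abar i) t m = Abar i m)
    (R : ℝ → (Fin N → ℝ) → (Fin N → ℝ))
    (hR_smooth : ContDiffOn ℝ (⊤ : ℕ∞) (fun p : ℝ × (Fin N → ℝ) => R p.1 p.2)
      ((Ioo (-ε₀) ε₀) ×ˢ (univ : Set (Fin N → ℝ))))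
    (hconj : ∀ ε ∈ Ioo (-ε₀) ε₀, ∀ m,
      (fderiv ℝ (T ε) m).inverse (ω (T ε m) • Υ (T ε m) + ε • A₁ (T ε m)) =
        ω m • Υ m + ε • avgVF φ A₁ m
          + ∑ i ∈ Finset.Icc 2 k, (ε ^ i / (Nat.factorial i : ℝ)) • Abar i m
          + ε ^ (k + 1) • R ε m)
    (J : (Fin N → ℝ) → ℝ) (hJ_smooth : ContDiff ℝ (⊤ : ℕ∞) J)
    (hJ_inv : ∀ t m, J (φ t m) = J m)
    (hJ_avg : ∀ m, fderiv ℝ J m (avgVF φ A₁ m) = 0)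
    (hJ_Abar : ∀ i, 2 ≤ i → i ≤ k → ∀ m, fderiv ℝ J m (Abar i m) = 0) :
    ∀ m, (fun ε : ℝ =>
        fderiv ℝ (fun n => J (Tinv ε n)) m (ω m • Υ m + ε • A₁ m))
      =O[nhds 0] fun ε : ℝ => ε ^ (k + 1) := by
  intro m
  have hone : ((⊤:ℕ∞) : WithTop ℕ∞) ≠ 0 := by simp
  have hIoo_mem : Ioo (-ε₀) ε₀ ∈ nhds (0:ℝ) := Ioo_mem_nhds (by linarith) hε₀
  have hopen : IsOpen ((Ioo (-ε₀) ε₀) ×ˢ (univ : Set (Fin N → ℝ))) :=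
    isOpen_Ioo.prod isOpen_univ
  -- J's derivative kills Υ
  have hJΥ : ∀ q, fderiv ℝ J q (Υ q) = 0 := by
    intro q
    have hd : HasDerivAt (fun t => J (φ t q)) (fderiv ℝ J (φ 0 q) (Υ (φ 0 q))) 0 :=
      ((hJ_smooth.differentiable hone (φ 0 q)).hasFDerivAt).comp_hasDerivAt 0 (hφ' 0 q)
    have hc : (fun t => J (φ t q)) = fun _ => J q := funext fun t => hJ_inv t q
    rw [hc] at hd
    have h0 := hd.unique (hasDerivAt_const 0 (J q))
    rwa [hφ0 q] at h0
  -- partial smoothness of T ε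
  have hTat : ∀ ε ∈ Ioo (-ε₀) ε₀, ∀ x, ContDiffAt ℝ (⊤:ℕ∞) (T ε) x := by
    intro ε hε x
    have h1 : ContDiffAt ℝ (⊤:ℕ∞) (fun p : ℝ × (Fin N → ℝ) => T p.1 p.2) (ε, x) :=
      hT_smooth.contDiffAt (hopen.mem_nhds ⟨hε, trivial⟩)
    exact h1.comp x (ContDiffAt.prodMk contDiffAt_const contDiffAt_id)
  -- key pointwise identity
  have key : ∀ ε ∈ Ioo (-ε₀) ε₀,
      fderiv ℝ (fun n => J (Tinv ε n)) m (ω m • Υ m + ε • A₁ m)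
        = ε ^ (k+1) * fderiv ℝ J (Tinv ε m) (R ε (Tinv ε m)) := by
    intro ε hε
    obtain ⟨hbij, hTinv_smooth, hleft, hright⟩ := hT_diffeo ε hε
    set p := Tinv ε m with hp
    have hTp : T ε p = m := hright m
    have hTinv_diff : DifferentiableAt ℝ (Tinv ε) m := (hTinv_smooth.differentiable hone) m
    have hT_diff : DifferentiableAt ℝ (T ε) p := (hTat ε hε p).differentiableAt hone
    have hJd : DifferentiableAt ℝ J p := hJ_smooth.differentiable hone p
    have hchain : fderiv ℝ (fun n => J (Tinv ε n)) m
        = (fderiv ℝ J p).comp (fderiv ℝ (Tinv ε) m) := by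
      have := fderiv_comp m hJd hTinv_diff
      simpa [Function.comp_def] using this
    have hcomp1 : (fderiv ℝ (Tinv ε) m).comp (fderiv ℝ (T ε) p)
        = ContinuousLinearMap.id ℝ (Fin N → ℝ) := by
      have h1 : fderiv ℝ (fun x => Tinv ε (T ε x)) p
          = (fderiv ℝ (Tinv ε) (T ε p)).comp (fderiv ℝ (T ε) p) := by
        have := fderiv_comp p ((hTinv_smooth.differentiable hone) (T ε p)) hT_diff
        simpa [Function.comp_def] using this
      have h2 : (fun x => Tinv ε (T ε x)) = id := funext fun x => hleft x
      rw [h2, hTp] at h1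
      rw [← h1, fderiv_id]
    have hcomp2 : (fderiv ℝ (T ε) p).comp (fderiv ℝ (Tinv ε) m)
        = ContinuousLinearMap.id ℝ (Fin N → ℝ) := by
      have h1 : fderiv ℝ (fun y => T ε (Tinv ε y)) m
          = (fderiv ℝ (T ε) (Tinv ε m)).comp (fderiv ℝ (Tinv ε) m) := by
        have := fderiv_comp m hT_diff hTinv_diff
        simpa [Function.comp_def] using this
      have h2 : (fun y => T ε (Tinv ε y)) = id := funext fun y => hright y
      rw [h2, ← hp] at h1
      rw [← h1, fderiv_id]
    have heq : fderiv ℝ (Tinv ε) m = (fderiv ℝ (T ε) p).inverse := by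
      let e := ContinuousLinearEquiv.equivOfInverse (fderiv ℝ (T ε) p) (fderiv ℝ (Tinv ε) m)
        (fun x => by
          have := ContinuousLinearMap.ext_iff.mp hcomp1 x
          simpa using this)
        (fun x => by
          have := ContinuousLinearMap.ext_iff.mp hcomp2 x
          simpa using this)
      have hcoe : (e : (Fin N → ℝ) →L[ℝ] (Fin N → ℝ)) = fderiv ℝ (T ε) p := rfl
      have hsymm : (e.symm : (Fin N → ℝ) →L[ℝ] (Fin N → ℝ)) = fderiv ℝ (Tinv ε) m := rfl
      rw [← hcoe, ContinuousLinearMap.inverse_equiv, hsymm]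
    have hmain := hconj ε hε p
    rw [hTp] at hmain
    have hval : fderiv ℝ (fun n => J (Tinv ε n)) m (ω m • Υ m + ε • A₁ m)
        = fderiv ℝ J p ((fderiv ℝ (T ε) p).inverse (ω m • Υ m + ε • A₁ m)) := by
      rw [hchain, ContinuousLinearMap.comp_apply, heq]
    rw [hval, hmain]
    have hsum : fderiv ℝ J p
        (∑ i ∈ Finset.Icc 2 k, (ε ^ i / (Nat.factorial i : ℝ)) • Abar i p) = 0 := by
      rw [map_sum]
      refine Finset.sum_eq_zero fun i hi => ?_
      rw [_root_.map_smul, hJ_Abar i (Finset.mem_Icc.mp hi).1 (Finset.mem_Icc.mp hi).2, smul_zero]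
    simp only [map_add, _root_.map_smul, hsum, hJΥ p, hJ_avg p, smul_eq_mul, mul_zero, add_zero,
      zero_add, smul_zero]
  -- continuity of ε ↦ Tinv ε m at 0 via the inverse function theorem
  have hm0 : ((0:ℝ), m) ∈ (Ioo (-ε₀) ε₀) ×ˢ (univ : Set (Fin N → ℝ)) :=
    ⟨⟨show -ε₀ < (0:ℝ) by linarith, hε₀⟩, trivial⟩
  have hTmAt : ContDiffAt ℝ (⊤:ℕ∞) (fun q : ℝ × (Fin N → ℝ) => T q.1 q.2) (0, m) :=
    hT_smooth.contDiffAt (hopen.mem_nhds hm0)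
  have hDTm : HasFDerivAt (fun q : ℝ × (Fin N → ℝ) => T q.1 q.2)
      (fderiv ℝ (fun q : ℝ × (Fin N → ℝ) => T q.1 q.2) (0, m)) (0, m) :=
    (hTmAt.differentiableAt hone).hasFDerivAt
  set DT := fderiv ℝ (fun q : ℝ × (Fin N → ℝ) => T q.1 q.2) (0, m) with hDTdef
  have hslice : ∀ v : Fin N → ℝ, DT (0, v) = v := by
    have hinner : HasFDerivAt (fun x : Fin N → ℝ => ((0:ℝ), x))
        ((0 : (Fin N → ℝ) →L[ℝ] ℝ).prod (ContinuousLinearMap.id ℝ (Fin N → ℝ))) m :=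
      HasFDerivAt.prodMk (hasFDerivAt_const (0:ℝ) m) (hasFDerivAt_id m)
    have hcomp : HasFDerivAt (fun x : Fin N → ℝ => T 0 x)
        (DT.comp ((0 : (Fin N → ℝ) →L[ℝ] ℝ).prod (ContinuousLinearMap.id ℝ (Fin N → ℝ)))) m :=
      hDTm.comp m hinner
    have hfun : (fun x : Fin N → ℝ => T 0 x) = id := funext fun x => hT0 x
    rw [hfun] at hcomp
    have huniq := hcomp.unique (hasFDerivAt_id m)
    intro v
    have hv := ContinuousLinearMap.ext_iff.mp huniq v
    simpa using hv
  set c : ℝ →L[ℝ] (Fin N → ℝ) := DT.comp (ContinuousLinearMap.inl ℝ ℝ (Fin N → ℝ)) with hcdef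
  have hDTq : ∀ q : ℝ × (Fin N → ℝ), DT q = c q.1 + q.2 := by
    intro q
    have h1 : DT (q.1, 0) + DT (0, q.2) = DT q := by
      rw [← map_add]; congr 1; simp
    rw [← h1, hslice q.2]
    congr 1
  -- the triangular equiv
  let eF : (ℝ × (Fin N → ℝ)) ≃L[ℝ] (ℝ × (Fin N → ℝ)) :=
    { toFun := fun q => (q.1, c q.1 + q.2)
      invFun := fun q => (q.1, q.2 - c q.1)
      map_add' := fun a b => by
        simp only [Prod.fst_add, Prod.snd_add, map_add, Prod.mk_add_mk]
        refine congrArg (Prod.mk _) ?_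
        abel
      map_smul' := fun r a => by
        simp only [Prod.smul_fst, Prod.smul_snd, _root_.map_smul, RingHom.id_apply,
          Prod.smul_mk, smul_add]
      left_inv := fun q => by simp
      right_inv := fun q => by simp
      continuous_toFun :=
        continuous_fst.prodMk ((c.continuous.comp continuous_fst).add continuous_snd)
      continuous_invFun :=
        continuous_fst.prodMk (continuous_snd.sub (c.continuous.comp continuous_fst)) }
  have hFd : HasFDerivAt (fun q : ℝ × (Fin N → ℝ) => (q.1, T q.1 q.2))
      ((ContinuousLinearMap.fst ℝ ℝ (Fin N → ℝ)).prod DT) (0, m) :=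
    HasFDerivAt.prodMk (hasFDerivAt_fst) hDTm
  have hLe : ((ContinuousLinearMap.fst ℝ ℝ (Fin N → ℝ)).prod DT)
      = (eF : (ℝ × (Fin N → ℝ)) →L[ℝ] (ℝ × (Fin N → ℝ))) := by
    refine ContinuousLinearMap.ext fun q => ?_
    have : (eF : (ℝ × (Fin N → ℝ)) →L[ℝ] (ℝ × (Fin N → ℝ))) q = (q.1, c q.1 + q.2) := rfl
    rw [this, ContinuousLinearMap.prod_apply, hDTq q]
    rfl
  have hFsm : ContDiffAt ℝ (⊤:ℕ∞) (fun q : ℝ × (Fin N → ℝ) => (q.1, T q.1 q.2)) (0, m) :=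
    ContDiffAt.prodMk contDiffAt_fst hTmAt
  have hstrict : HasStrictFDerivAt (fun q : ℝ × (Fin N → ℝ) => (q.1, T q.1 q.2))
      (eF : (ℝ × (Fin N → ℝ)) →L[ℝ] (ℝ × (Fin N → ℝ))) (0, m) :=
    hFsm.hasStrictFDerivAt' (hLe ▸ hFd) hone
  set G := hstrict.localInverse (fun q : ℝ × (Fin N → ℝ) => (q.1, T q.1 q.2)) eF (0, m)
    with hGdef
  have hev : ∀ᶠ q in nhds ((0:ℝ), m),
      (fun q : ℝ × (Fin N → ℝ) => (q.1, T q.1 q.2)) (G q) = q := by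
    simpa [hT0 m] using hstrict.eventually_right_inverse
  have htend : Filter.Tendsto (fun ε : ℝ => ((ε, m) : ℝ × (Fin N → ℝ))) (nhds 0)
      (nhds ((0:ℝ), m)) :=
    (Continuous.prodMk continuous_id continuous_const).tendsto 0
  have hevε : ∀ᶠ ε : ℝ in nhds 0, Tinv ε m = (G (ε, m)).2 := by
    filter_upwards [htend.eventually hev, hIoo_mem] with ε h1 h2
    obtain ⟨hbij, _, hleft, _⟩ := hT_diffeo ε h2
    have ha : (G (ε, m)).1 = ε := congrArg Prod.fst h1
    have hb : T (G (ε, m)).1 (G (ε, m)).2 = m := congrArg Prod.snd h1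
    rw [ha] at hb
    have hx := hleft (G (ε, m)).2
    rw [hb] at hx
    exact hx
  have hGtend : Filter.Tendsto (fun ε : ℝ => (G (ε, m)).2) (nhds 0) (nhds m) := by
    have h1 : ContinuousAt G ((0:ℝ), m) := by
      simpa [hT0 m] using hstrict.localInverse_continuousAt
    have h2 : G ((0:ℝ), m) = ((0:ℝ), m) := by
      simpa [hT0 m] using hstrict.localInverse_apply_image
    have h3 := h1.tendsto.comp htend
    rw [h2] at h3
    exact (continuous_snd.tendsto ((0:ℝ), m)).comp h3
  have hptend : Filter.Tendsto (fun ε : ℝ => Tinv ε m) (nhds 0) (nhds m) :=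
    Filter.Tendsto.congr' (by filter_upwards [hevε] with ε h using h.symm) hGtend
  -- boundedness of the remainder factor
  have hh : Filter.Tendsto (fun ε : ℝ => fderiv ℝ J (Tinv ε m) (R ε (Tinv ε m))) (nhds 0)
      (nhds (fderiv ℝ J m (R 0 m))) := by
    have hpair : Filter.Tendsto (fun ε : ℝ => ((ε, Tinv ε m) : ℝ × (Fin N → ℝ))) (nhds 0)
        (nhds ((0:ℝ), m)) := Filter.Tendsto.prodMk_nhds Filter.tendsto_id hptend
    have hR : Filter.Tendsto (fun ε : ℝ => R ε (Tinv ε m)) (nhds 0) (nhds (R 0 m)) := by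
      have hc : ContinuousAt (fun q : ℝ × (Fin N → ℝ) => R q.1 q.2) (0, m) :=
        (hR_smooth.continuousOn.continuousAt (hopen.mem_nhds hm0))
      exact hc.tendsto.comp hpair
    have hDJ : Filter.Tendsto (fun ε : ℝ => fderiv ℝ J (Tinv ε m)) (nhds 0)
        (nhds (fderiv ℝ J m)) :=
      ((hJ_smooth.continuous_fderiv hone).tendsto m).comp hptend
    exact ((isBoundedBilinearMap_apply.continuous.tendsto _).comp
      (Filter.Tendsto.prodMk_nhds hDJ hR))
  have hO1 : (fun ε : ℝ => fderiv ℝ J (Tinv ε m) (R ε (Tinv ε m)))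
      =O[nhds 0] (fun _ : ℝ => (1:ℝ)) := hh.isBigO_one ℝ
  have h2 : (fun ε : ℝ => ε ^ (k+1) * fderiv ℝ J (Tinv ε m) (R ε (Tinv ε m)))
      =O[nhds 0] fun ε : ℝ => ε ^ (k+1) := by
    have := (isBigO_refl (fun ε : ℝ => ε ^ (k+1)) (nhds 0)).mul hO1
    simpa using this
  have hev2 : (fun ε : ℝ => fderiv ℝ (fun n => J (Tinv ε n)) m (ω m • Υ m + ε • A₁ m))
      =ᶠ[nhds 0] fun ε : ℝ => ε ^ (k+1) * fderiv ℝ J (Tinv ε m) (R ε (Tinv ε m)) := by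
    filter_upwards [hIoo_mem] with ε hε using key ε hε
  exact hev2.trans_isBigO h2
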